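/- Let Ω ⊆ ℝ^N be nonempty open, ω : Ω × Ω → [0,∞) continuous and symmetric, and u ∈ L^1_loc(Ω) weakly differentiable in the i-th direction with weak derivative ∂_i u ∈ L^1_loc(Ω). Then for every ψ ∈ C_c^1(Ω × Ω), ∫_Ω u(x) ∂*_{ω,i}(ψ)(x) dx = −∫_{Ω×Ω} ω(x,y)(∂_i u(y) − ∂_i u(x)) ψ(x,y) dx dy, where ∂*_{ω,i}(ψ)(x) := ∫_Ω ∂/∂x_i [ω(x,y)(ψ(y,x) − ψ(x,y))] dy. -/

import Mathlib

open MeasureTheory Set Metric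
open scoped ENNReal NNReal

/-- Let `Ω ⊆ ℝ^N` be nonempty open, `ω` a `C^1`, nonnegative and symmetric
weight on `Ω × Ω`, and `u ∈ L^1_loc(Ω)` with weak `i`-th partial derivative
`d ∈ L^1_loc(Ω)`. Then for every `ψ ∈ C_c^1(Ω × Ω)`,
`∫_Ω u(x) ∂*_{ω,i}(ψ)(x) dx = −∫_{Ω×Ω} ω(x,y)(d(y) − d(x)) ψ(x,y) dx dy`, where
`∂*_{ω,i}(ψ)(x) = ∫_Ω ∂_{x_i}[ω(x,y)(ψ(y,x) − ψ(x,y))] dy`. -/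
theorem statement17 (N : ℕ) (Ω : Set (EuclideanSpace ℝ (Fin N)))
    (hΩ_open : IsOpen Ω) (hΩ_ne : Ω.Nonempty)
    (ω : EuclideanSpace ℝ (Fin N) → EuclideanSpace ℝ (Fin N) → ℝ)
    (hω_smooth : ContDiffOn ℝ 1 (fun z : EuclideanSpace ℝ (Fin N) × EuclideanSpace ℝ (Fin N)
      => ω z.1 z.2) (Ω ×ˢ Ω))
    (hω_nonneg : ∀ x ∈ Ω, ∀ y ∈ Ω, 0 ≤ ω x y)
    (hω_symm : ∀ x ∈ Ω, ∀ y ∈ Ω, ω x y = ω y x)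
    (i : Fin N)
    (u : EuclideanSpace ℝ (Fin N) → ℝ) (d : EuclideanSpace ℝ (Fin N) → ℝ)
    (hu : LocallyIntegrableOn u Ω) (hd : LocallyIntegrableOn d Ω)
    (hweak : ∀ φ : EuclideanSpace ℝ (Fin N) → ℝ, ContDiff ℝ 1 φ → HasCompactSupport φ →
      tsupport φ ⊆ Ω →
      ∫ x in Ω, u x * fderiv ℝ φ x (EuclideanSpace.single i (1:ℝ))
        = - ∫ x in Ω, d x * φ x) :
    ∀ ψ : EuclideanSpace ℝ (Fin N) × EuclideanSpace ℝ (Fin N) → ℝ,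
      ContDiff ℝ 1 ψ → HasCompactSupport ψ → tsupport ψ ⊆ Ω ×ˢ Ω →
      ∫ x in Ω, u x *
          (∫ y in Ω, fderiv ℝ (fun x' => ω x' y * (ψ (y, x') - ψ (x', y))) x
            (EuclideanSpace.single i (1:ℝ)))
        = - ∫ z, ω z.1 z.2 * (d z.2 - d z.1) * ψ z
            ∂((volume.restrict Ω).prod (volume.restrict Ω)) := by
  classical
  intro ψ hψ hψc hψΩ
  have hΩm : MeasurableSet Ω := hΩ_open.measurableSet
  set π : Measure (EuclideanSpace ℝ (Fin N) × EuclideanSpace ℝ (Fin N)) :=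
    (volume.restrict Ω).prod (volume.restrict Ω) with hπ_def
  -- the swapped test function
  have hψs : ContDiff ℝ 1
      (fun z : EuclideanSpace ℝ (Fin N) × EuclideanSpace ℝ (Fin N) => ψ (z.2, z.1)) :=
    hψ.comp (contDiff_snd.prodMk contDiff_fst)
  have hψsc : HasCompactSupport
      (fun z : EuclideanSpace ℝ (Fin N) × EuclideanSpace ℝ (Fin N) => ψ (z.2, z.1)) :=
    hψc.comp_isClosedEmbedding (Homeomorph.prodComm _ _).isClosedEmbedding
  have hψsΩ : tsupport
      (fun z : EuclideanSpace ℝ (Fin N) × EuclideanSpace ℝ (Fin N) => ψ (z.2, z.1)) ⊆ Ω ×ˢ Ω := by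
    have h1 : tsupport
        (fun z : EuclideanSpace ℝ (Fin N) × EuclideanSpace ℝ (Fin N) => ψ (z.2, z.1))
        ⊆ Prod.swap ⁻¹' tsupport ψ :=
      closure_minimal (fun z hz => subset_closure hz)
        (isClosed_closure.preimage continuous_swap)
    intro z hz
    have h2 := hψΩ (h1 hz)
    exact ⟨h2.2, h2.1⟩
  -- the compact set containing all supports
  set K : Set (EuclideanSpace ℝ (Fin N) × EuclideanSpace ℝ (Fin N)) :=
    tsupport (fun z : EuclideanSpace ℝ (Fin N) × EuclideanSpace ℝ (Fin N) => ψ (z.2, z.1))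
      ∪ tsupport ψ with hK_def
  have hKcomp : IsCompact K := hψsc.union hψc
  have hKclosed : IsClosed K := isClosed_closure.union isClosed_closure
  have hKΩ : K ⊆ Ω ×ˢ Ω := union_subset hψsΩ hψΩ
  -- smoothness of ω times a test function
  have key : ∀ φ : EuclideanSpace ℝ (Fin N) × EuclideanSpace ℝ (Fin N) → ℝ,
      ContDiff ℝ 1 φ → tsupport φ ⊆ Ω ×ˢ Ω →
      ContDiff ℝ 1 (fun z : EuclideanSpace ℝ (Fin N) × EuclideanSpace ℝ (Fin N)
        => ω z.1 z.2 * φ z) := by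
    intro φ hφ hφΩ
    rw [← contDiffOn_univ]
    apply contDiffOn_of_locally_contDiffOn
    intro z _
    by_cases hz : z ∈ Ω ×ˢ Ω
    · exact ⟨Ω ×ˢ Ω, hΩ_open.prod hΩ_open, hz,
        (hω_smooth.mul hφ.contDiffOn).mono inter_subset_right⟩
    · refine ⟨(tsupport φ)ᶜ, (isClosed_tsupport φ).isOpen_compl, fun h => hz (hφΩ h), ?_⟩
      exact (contDiffOn_const (c := (0:ℝ))).congr fun w hw => by
        rw [image_eq_zero_of_notMem_tsupport hw.2, mul_zero]
  -- the main function g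
  set g : EuclideanSpace ℝ (Fin N) × EuclideanSpace ℝ (Fin N) → ℝ :=
    fun z => ω z.1 z.2 * (ψ (z.2, z.1) - ψ z) with hg_def
  have hψs0 : ∀ z ∉ K, ψ (z.2, z.1) = (0:ℝ) := by
    intro z hz
    exact image_eq_zero_of_notMem_tsupport
      (f := fun z : EuclideanSpace ℝ (Fin N) × EuclideanSpace ℝ (Fin N) => ψ (z.2, z.1))
      fun h => hz (Or.inl h)
  have hψ0 : ∀ z ∉ K, ψ z = (0:ℝ) := by
    intro z hz
    exact image_eq_zero_of_notMem_tsupport fun h => hz (Or.inr h)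
  have hg0 : ∀ z ∉ K, g z = 0 := by
    intro z hz
    rw [hg_def]
    simp [hψs0 z hz, hψ0 z hz]
  have hhΩ : tsupport (fun z : EuclideanSpace ℝ (Fin N) × EuclideanSpace ℝ (Fin N)
      => ψ (z.2, z.1) - ψ z) ⊆ Ω ×ˢ Ω := by
    refine (closure_minimal ?_ hKclosed).trans hKΩ
    intro z hz
    by_contra hzK
    refine hz ?_
    show ψ (z.2, z.1) - ψ z = 0
    rw [hψs0 z hzK, hψ0 z hzK, sub_zero]
  have hg : ContDiff ℝ 1 g := key _ (hψs.sub hψ) hhΩ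
  have hgc : HasCompactSupport g := HasCompactSupport.intro hKcomp hg0
  -- projections of K
  set A₁ : Set (EuclideanSpace ℝ (Fin N)) := Prod.fst '' K with hA₁_def
  set A₂ : Set (EuclideanSpace ℝ (Fin N)) := Prod.snd '' K with hA₂_def
  have hA₁c : IsCompact A₁ := hKcomp.image continuous_fst
  have hA₂c : IsCompact A₂ := hKcomp.image continuous_snd
  have hA₁Ω : A₁ ⊆ Ω := by rintro _ ⟨z, hz, rfl⟩; exact (hKΩ hz).1
  have hA₂Ω : A₂ ⊆ Ω := by rintro _ ⟨z, hz, rfl⟩; exact (hKΩ hz).2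
  have hKsub : K ⊆ A₁ ×ˢ A₂ := fun z hz => ⟨mem_image_of_mem _ hz, mem_image_of_mem _ hz⟩
  -- bound helper
  have hbd : ∀ q : EuclideanSpace ℝ (Fin N) × EuclideanSpace ℝ (Fin N) → ℝ,
      Continuous q → (∀ z ∉ K, q z = 0) → ∃ C : ℝ, 0 ≤ C ∧ ∀ z, ‖q z‖ ≤ C := by
    intro q hq hq0
    obtain ⟨C, hC⟩ := (HasCompactSupport.intro hKcomp hq0).exists_bound_of_continuous hq
    exact ⟨C, le_trans (norm_nonneg _) (hC 0), hC⟩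
  -- integrable indicators
  have hdint : ∀ A : Set (EuclideanSpace ℝ (Fin N)), IsCompact A → A ⊆ Ω → ∀ C : ℝ,
      Integrable (A.indicator fun x => C * ‖d x‖) (volume.restrict Ω) := by
    intro A hA hAΩ C
    rw [integrable_indicator_iff hA.measurableSet, IntegrableOn,
      Measure.restrict_restrict hA.measurableSet, inter_eq_self_of_subset_left hAΩ]
    exact ((hd.integrableOn_compact_subset hAΩ hA).norm.const_mul C)
  have hcint : ∀ A : Set (EuclideanSpace ℝ (Fin N)), IsCompact A →
      Integrable (A.indicator fun _ => (1:ℝ)) (volume.restrict Ω) := by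
    intro A hA
    rw [integrable_indicator_iff hA.measurableSet]
    exact integrableOn_const (lt_of_le_of_lt
      (Measure.restrict_apply_le _ _) hA.measure_lt_top).ne
  have hd_meas : AEStronglyMeasurable d (volume.restrict Ω) := hd.aestronglyMeasurable
  -- integrability of products with d
  have hmain : ∀ q : EuclideanSpace ℝ (Fin N) × EuclideanSpace ℝ (Fin N) → ℝ,
      Continuous q → (∀ z ∉ K, q z = 0) →
      Integrable (fun z => d z.1 * q z) π ∧ Integrable (fun z => d z.2 * q z) π := by
    intro q hq hq0
    obtain ⟨C, hC0, hC⟩ := hbd q hq hq0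
    constructor
    · refine (Integrable.mul_prod (hdint A₁ hA₁c hA₁Ω C) (hcint A₂ hA₂c)).mono'
        (hd_meas.comp_fst.mul hq.aestronglyMeasurable) (Filter.Eventually.of_forall fun z => ?_)
      by_cases hz : q z = 0
      · rw [hz, mul_zero, norm_zero]
        exact mul_nonneg (indicator_nonneg (fun x _ => by positivity) _)
          (indicator_nonneg (fun x _ => zero_le_one) _)
      · have hzK : z ∈ K := by by_contra h; exact hz (hq0 z h)
        rw [indicator_of_mem (hKsub hzK).1, indicator_of_mem (hKsub hzK).2, mul_one,
          norm_mul, mul_comm C ‖d z.1‖]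
        exact mul_le_mul_of_nonneg_left (hC z) (norm_nonneg _)
    · refine (Integrable.mul_prod (hcint A₁ hA₁c) (hdint A₂ hA₂c hA₂Ω C)).mono'
        (hd_meas.comp_snd.mul hq.aestronglyMeasurable) (Filter.Eventually.of_forall fun z => ?_)
      by_cases hz : q z = 0
      · rw [hz, mul_zero, norm_zero]
        exact mul_nonneg (indicator_nonneg (fun x _ => zero_le_one) _)
          (indicator_nonneg (fun x _ => by positivity) _)
      · have hzK : z ∈ K := by by_contra h; exact hz (hq0 z h)
        rw [indicator_of_mem (hKsub hzK).1, indicator_of_mem (hKsub hzK).2, one_mul,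
          norm_mul, mul_comm C ‖d z.2‖]
        exact mul_le_mul_of_nonneg_left (hC z) (norm_nonneg _)
  -- the fderiv of g and its bound
  have hg'cont : Continuous (fderiv ℝ g) := (contDiff_one_iff_fderiv.1 hg).2
  have hg'c : HasCompactSupport (fderiv ℝ g) := HasCompactSupport.fderiv (𝕜 := ℝ) hgc
  obtain ⟨C₁, hC₁⟩ := hg'c.exists_bound_of_continuous hg'cont
  have hgK : tsupport g ⊆ K := closure_minimal (fun z hz => by
    by_contra h; exact hz (hg0 z h)) hKclosed
  have hg'0 : ∀ z ∉ K, fderiv ℝ g z = 0 := by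
    intro z hz
    by_contra h
    exact hz (hgK (support_fderiv_subset ℝ (f := g) h))
  -- partial derivative in the first variable
  set F' : EuclideanSpace ℝ (Fin N) → EuclideanSpace ℝ (Fin N) →
      (EuclideanSpace ℝ (Fin N) →L[ℝ] ℝ) :=
    fun x y => (fderiv ℝ g (x, y)).comp
      (ContinuousLinearMap.inl ℝ (EuclideanSpace ℝ (Fin N)) (EuclideanSpace ℝ (Fin N)))
      with hF'_def
  have hpart : ∀ x y, HasFDerivAt (fun x' => g (x', y)) (F' x y) x := fun x y => by
    have := ((hg.differentiable one_ne_zero (x, y)).hasFDerivAt).comp x (hasFDerivAt_prodMk_left (𝕜 := ℝ) x y); exact this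
  set D : ℝ := C₁ * ‖ContinuousLinearMap.inl ℝ (EuclideanSpace ℝ (Fin N))
    (EuclideanSpace ℝ (Fin N))‖ with hD_def
  have hF'zero : ∀ x y, (x, y) ∉ K → F' x y = 0 := by
    intro x y h
    show (fderiv ℝ g (x, y)).comp _ = 0
    rw [hg'0 _ h, ContinuousLinearMap.zero_comp]
  have hF'bound : ∀ x y, ‖F' x y‖ ≤ A₂.indicator (fun _ => D) y := by
    intro x y
    by_cases hy : y ∈ A₂
    · rw [indicator_of_mem hy]
      exact le_trans (ContinuousLinearMap.opNorm_comp_le _ _)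
        (mul_le_mul_of_nonneg_right (hC₁ (x, y)) (norm_nonneg _))
    · rw [indicator_of_notMem hy, hF'zero x y fun h => hy (hKsub h).2, norm_zero]
  have hboundint : Integrable (A₂.indicator fun _ => D) volume := by
    rw [integrable_indicator_iff hA₂c.measurableSet]
    exact integrableOn_const hA₂c.measure_lt_top.ne
  have hF'cont_y : ∀ x, Continuous (fun y => F' x y) := fun x =>
    (hg'cont.comp (continuous_const.prodMk continuous_id)).clm_comp continuous_const
  have hF'cont_x : ∀ y, Continuous (fun x => F' x y) := fun y =>
    (hg'cont.comp (continuous_id.prodMk continuous_const)).clm_comp continuous_const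
  have hF'int : ∀ x, Integrable (fun y => F' x y) volume := by
    intro x
    refine (hF'cont_y x).integrable_of_hasCompactSupport
      (HasCompactSupport.intro hA₂c fun y hy => ?_)
    exact hF'zero x y fun h => hy (hKsub h).2
  -- the function F and its properties
  set F : EuclideanSpace ℝ (Fin N) → ℝ := fun x => ∫ y, g (x, y) with hF_def
  have hgcont_y : ∀ x, Continuous (fun y => g (x, y)) := fun x =>
    hg.continuous.comp (continuous_const.prodMk continuous_id)
  have hgint_y : ∀ x, Integrable (fun y => g (x, y)) volume := by
    intro x
    exact (hgcont_y x).integrable_of_hasCompactSupport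
      (HasCompactSupport.intro hA₂c fun y hy => hg0 (x, y) fun h => hy (hKsub h).2)
  have hFd : ∀ x, HasFDerivAt F (∫ y, F' x y) x := by
    intro x
    refine hasFDerivAt_integral_of_dominated_of_fderiv_le (s := Metric.ball x 1) (Metric.ball_mem_nhds x zero_lt_one)
      (Filter.Eventually.of_forall fun x' => (hgcont_y x').aestronglyMeasurable)
      (hgint_y x) ((hF'cont_y x).aestronglyMeasurable)
      (Filter.Eventually.of_forall fun y => fun x' _ => hF'bound x' y) hboundint
      (Filter.Eventually.of_forall fun y => fun x' _ => hpart x' y)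
  have hF1 : ContDiff ℝ 1 F := by
    rw [contDiff_one_iff_fderiv]
    refine ⟨fun x => (hFd x).differentiableAt, ?_⟩
    have heq : fderiv ℝ F = fun x => ∫ y, F' x y := funext fun x => (hFd x).fderiv
    rw [heq]
    exact continuous_of_dominated (fun x => (hF'cont_y x).aestronglyMeasurable)
      (fun x => Filter.Eventually.of_forall fun y => hF'bound x y) hboundint
      (Filter.Eventually.of_forall fun y => hF'cont_x y)
  have hFvan : ∀ x ∉ A₁, F x = 0 := by
    intro x hx
    have : ∀ y, g (x, y) = 0 := fun y => hg0 (x, y) fun h => hx (hKsub h).1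
    rw [hF_def]
    simp only [this, integral_zero]
  have hFc : HasCompactSupport F := HasCompactSupport.intro hA₁c hFvan
  have hFΩ : tsupport F ⊆ Ω :=
    (closure_minimal (Function.support_subset_iff'.2 hFvan) hA₁c.isClosed).trans hA₁Ω
  -- rewrite the inner integral
  have hfeq : ∀ y : EuclideanSpace ℝ (Fin N),
      (fun x' => ω x' y * (ψ (y, x') - ψ (x', y))) = (fun x' => g (x', y)) := fun y => rfl
  have hrw : ∀ x, (∫ y in Ω, fderiv ℝ (fun x' => g (x', y)) x (EuclideanSpace.single i (1:ℝ)))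
      = fderiv ℝ F x (EuclideanSpace.single i (1:ℝ)) := by
    intro x
    have ha : ∀ y, fderiv ℝ (fun x' => g (x', y)) x = F' x y := fun y => (hpart x y).fderiv
    simp only [ha]
    rw [setIntegral_eq_integral_of_forall_compl_eq_zero (fun y hy => by
        rw [hF'zero x y fun h => hy (hKΩ h).2]; rfl),
      ← ContinuousLinearMap.integral_apply (hF'int x), (hFd x).fderiv]
  -- the test functions q₁ and q₂
  set q₁ : EuclideanSpace ℝ (Fin N) × EuclideanSpace ℝ (Fin N) → ℝ :=
    fun z => ω z.1 z.2 * ψ (z.2, z.1) with hq₁_def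
  set q₂ : EuclideanSpace ℝ (Fin N) × EuclideanSpace ℝ (Fin N) → ℝ :=
    fun z => ω z.1 z.2 * ψ z with hq₂_def
  have hq₁cont : Continuous q₁ := (key _ hψs hψsΩ).continuous
  have hq₂cont : Continuous q₂ := (key _ hψ hψΩ).continuous
  have hq₁0 : ∀ z ∉ K, q₁ z = 0 := fun z hz => by rw [hq₁_def]; simp [hψs0 z hz]
  have hq₂0 : ∀ z ∉ K, q₂ z = 0 := fun z hz => by rw [hq₂_def]; simp [hψ0 z hz]
  have hint_g := (hmain g hg.continuous hg0).1
  have hint_q₁ := hmain q₁ hq₁cont hq₁0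
  have hint_q₂ := hmain q₂ hq₂cont hq₂0
  -- the chain of equalities for the d-integral
  have e1 : ∀ x, (∫ y in Ω, d x * g (x, y)) = d x * F x := by
    intro x
    rw [setIntegral_eq_integral_of_forall_compl_eq_zero
        (fun y hy => by rw [hg0 (x, y) fun hk => hy (hKΩ hk).2, mul_zero]),
      integral_const_mul]
  have e2 : (∫ x in Ω, ∫ y in Ω, d x * g (x, y)) = ∫ z, d z.1 * g z ∂π := by
    have h := integral_integral (μ := volume.restrict Ω) (ν := volume.restrict Ω)
      (f := fun x y => d x * g (x, y)) hint_g
    rw [← h]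
  have e3 : (∫ z, d z.1 * g z ∂π)
      = (∫ z, d z.1 * q₁ z ∂π) - ∫ z, d z.1 * q₂ z ∂π := by
    rw [← integral_sub hint_q₁.1 hint_q₂.1]
    refine integral_congr_ae (Filter.Eventually.of_forall fun z => ?_)
    rw [hg_def, hq₁_def, hq₂_def]; ring
  have e4 : (∫ z, d z.1 * q₁ z ∂π) = ∫ z, d z.2 * (ω z.2 z.1 * ψ z) ∂π := by
    have h := integral_prod_swap (μ := volume.restrict Ω) (ν := volume.restrict Ω)
      (fun z : EuclideanSpace ℝ (Fin N) × EuclideanSpace ℝ (Fin N)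
        => d z.2 * (ω z.2 z.1 * ψ z))
    exact h
  have haeΩ : ∀ᵐ z ∂π, z ∈ Ω ×ˢ Ω := by
    rw [hπ_def, Measure.prod_restrict]
    exact ae_restrict_mem (hΩm.prod hΩm)
  have e5 : (∫ z, d z.2 * (ω z.2 z.1 * ψ z) ∂π) = ∫ z, d z.2 * q₂ z ∂π := by
    refine integral_congr_ae (haeΩ.mono fun z hz => ?_)
    rw [hq₂_def]
    simp only []
    rw [hω_symm z.2 hz.2 z.1 hz.1]
  have e6 : (∫ z, d z.2 * q₂ z ∂π) - (∫ z, d z.1 * q₂ z ∂π)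
      = ∫ z, ω z.1 z.2 * (d z.2 - d z.1) * ψ z ∂π := by
    rw [← integral_sub hint_q₂.2 hint_q₂.1]
    refine integral_congr_ae (Filter.Eventually.of_forall fun z => ?_)
    rw [hq₂_def]; ring
  have hlast : (∫ x in Ω, d x * F x) = ∫ z, ω z.1 z.2 * (d z.2 - d z.1) * ψ z ∂π := by
    have e1' : (∫ x in Ω, d x * F x) = ∫ x in Ω, ∫ y in Ω, d x * g (x, y) :=
      integral_congr_ae (Filter.Eventually.of_forall fun x => (e1 x).symm)
    rw [e1', e2, e3, e4, e5, e6]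
  calc ∫ x in Ω, u x * (∫ y in Ω, fderiv ℝ
        (fun x' => ω x' y * (ψ (y, x') - ψ (x', y))) x (EuclideanSpace.single i (1:ℝ)))
      = ∫ x in Ω, u x * fderiv ℝ F x (EuclideanSpace.single i (1:ℝ)) := by
        simp only [hfeq, hrw]
    _ = - ∫ x in Ω, d x * F x := hweak F hF1 hFc hFΩ
    _ = - ∫ z, ω z.1 z.2 * (d z.2 - d z.1) * ψ z ∂π := by rw [hlast]
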